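/- Let 𝕂 be a commutative ring and let M and N be 𝕂-modules. Write T̄(M) = ⨁_{k≥1} M^{⊗k} for the 𝕂-module underlying the reduced (non-unital) tensor algebra on M. Then there is an isomorphism of 𝕂-modules T̄(M ⊕ N) ≅ T̄(M) ⊕ T̄(N) ⊕ (T̄(M) ⊗ T̄(N)) ⊕ (T̄(N) ⊗ T̄(M)) ⊕ (T̄(M ⊕ N) ⊗ T̄(M) ⊗ T̄(N)). -/

import Mathlib

set_option linter.dupNamespace false
open scoped TensorProduct DirectSum
universe u v w

namespace RTAaux
section helpers
variable (𝕂 : Type u) [CommRing 𝕂]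

noncomputable def dsCongr {ι : Type*} {A B : ι → Type*} [∀ i, AddCommGroup (A i)]
    [∀ i, Module 𝕂 (A i)] [∀ i, AddCommGroup (B i)] [∀ i, Module 𝕂 (B i)]
    (e : ∀ i, A i ≃ₗ[𝕂] B i) : (⨁ i, A i) ≃ₗ[𝕂] ⨁ i, B i :=
  DFinsupp.mapRange.linearEquiv e

noncomputable def dsSum {ι κ : Type*} [DecidableEq ι] [DecidableEq κ] (A : ι ⊕ κ → Type*)
    [∀ s, AddCommGroup (A s)] [∀ s, Module 𝕂 (A s)] :
    (⨁ s, A s) ≃ₗ[𝕂] (⨁ i, A (.inl i)) × (⨁ j, A (.inr j)) := by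
  refine LinearEquiv.ofLinear
    (DirectSum.toModule 𝕂 _ _ fun s => match s with
      | .inl i => (LinearMap.inl 𝕂 _ _).comp (DirectSum.lof 𝕂 _ (fun i => A (.inl i)) i)
      | .inr j => (LinearMap.inr 𝕂 _ _).comp (DirectSum.lof 𝕂 _ (fun j => A (.inr j)) j))
    (LinearMap.coprod
      (DirectSum.toModule 𝕂 _ _ fun i => DirectSum.lof 𝕂 _ A (.inl i))
      (DirectSum.toModule 𝕂 _ _ fun j => DirectSum.lof 𝕂 _ A (.inr j)))
    ?_ ?_
  · refine LinearMap.prod_ext ?_ ?_ <;>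
      refine DirectSum.linearMap_ext _ fun i => ?_ <;>
      ext x <;>
      simp [DirectSum.toModule_lof]
  · refine DirectSum.linearMap_ext _ fun s => ?_
    rcases s with i | j <;> ext x <;> simp [DirectSum.toModule_lof]

noncomputable def eqLEquiv {κ : Type*} (A : κ → Type*) [∀ k, AddCommGroup (A k)]
    [∀ k, Module 𝕂 (A k)] {x y : κ} (h : x = y) : A x ≃ₗ[𝕂] A y := by
  subst h; exact LinearEquiv.refl _ _

noncomputable def dsReindex {ι κ : Type*} [DecidableEq κ] (c : ι ≃ κ) (A : κ → Type*)
    [∀ k, AddCommGroup (A k)] [∀ k, Module 𝕂 (A k)] :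
    (⨁ i, A (c i)) ≃ₗ[𝕂] ⨁ k, A k :=
  (DirectSum.lequivCongrLeft 𝕂 (M := fun i => A (c i)) c).trans
    (dsCongr 𝕂 fun k => eqLEquiv 𝕂 A (c.apply_symm_apply k))

noncomputable def powSucc (P : Type v) [AddCommGroup P] [Module 𝕂 P] (k : ℕ) :
    (⨂[𝕂]^(k+1) P) ≃ₗ[𝕂] P ⊗[𝕂] (⨂[𝕂]^k P) :=
  ((TensorProduct.congr
      ((PiTensorProduct.subsingletonEquiv (R := 𝕂) (s := fun _ : Fin 1 => P) (0 : Fin 1)).symm : P ≃ₗ[𝕂] ⨂[𝕂] _ : Fin 1, P)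
      (LinearEquiv.refl 𝕂 (⨂[𝕂]^k P))).trans
    ((PiTensorProduct.tmulEquiv 𝕂 P).trans
      (PiTensorProduct.reindex 𝕂 (fun _ => P) (finSumFinEquiv.trans (finCongr (Nat.add_comm 1 k)))))).symm

noncomputable def shuffle (A B C D E G : Type*) [AddCommMonoid A] [Module 𝕂 A]
    [AddCommMonoid B] [Module 𝕂 B] [AddCommMonoid C] [Module 𝕂 C] [AddCommMonoid D] [Module 𝕂 D]
    [AddCommMonoid E] [Module 𝕂 E] [AddCommMonoid G] [Module 𝕂 G] :
    ((A × (C × E)) × (B × (D × G))) ≃ₗ[𝕂] A × (B × (C × (D × (E × G)))) where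
  toFun p := (p.1.1, (p.2.1, (p.1.2.1, (p.2.2.1, (p.1.2.2, p.2.2.2)))))
  invFun q := ((q.1, (q.2.2.1, q.2.2.2.2.1)), (q.2.1, (q.2.2.2.1, q.2.2.2.2.2)))
  left_inv _ := rfl
  right_inv _ := rfl
  map_add' _ _ := rfl
  map_smul' _ _ := rfl
end helpers
/-! word combinatorics -/

abbrev Np := {n : ℕ // 0 < n}
abbrev Hd (b : Bool) := {w : List Bool // w.head? = some b}
abbrev Wd := {w : List Bool // w ≠ []}
abbrev Lw (k : ℕ) := {w : List Bool // w.length = k}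

def lead (b : Bool) : List Bool → ℕ
  | [] => 0
  | c :: l => if c = b then lead b l + 1 else 0

def rest (b : Bool) : List Bool → List Bool
  | [] => []
  | c :: l => if c = b then rest b l else c :: l

lemma decomp (b : Bool) : ∀ w : List Bool, List.replicate (lead b w) b ++ rest b w = w
  | [] => rfl
  | c :: l => by
      by_cases h : c = b
      · subst h; simp [lead, rest, List.replicate_succ, decomp c l]
      · simp [lead, rest, h]

lemma lead_pos {b : Bool} {w : List Bool} (h : w.head? = some b) : 0 < lead b w := by
  cases w with
  | nil => simp at h
  | cons c l => simp at h; subst h; simp [lead]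

lemma rest_head (b : Bool) : ∀ w : List Bool, (rest b w).head? ≠ some b
  | [] => by simp [rest]
  | c :: l => by
      by_cases h : c = b
      · simpa [rest, h] using rest_head b l
      · simp [rest, h]

lemma lead_rep (b : Bool) (k : ℕ) {w : List Bool} (hw : w.head? ≠ some b) :
    lead b (List.replicate k b ++ w) = k := by
  induction k with
  | zero =>
      simp only [List.replicate_zero, List.nil_append]
      cases w with
      | nil => rfl
      | cons c l =>
          have : c ≠ b := by simpa using hw
          simp [lead, this]
  | succ n ih => simp [List.replicate_succ, lead, ih]

lemma rest_rep (b : Bool) (k : ℕ) {w : List Bool} (hw : w.head? ≠ some b) :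
    rest b (List.replicate k b ++ w) = w := by
  induction k with
  | zero =>
      simp only [List.replicate_zero, List.nil_append]
      cases w with
      | nil => rfl
      | cons c l =>
          have : c ≠ b := by simpa using hw
          simp [rest, this]
  | succ n ih => simp [List.replicate_succ, rest, ih]

/-- peel off the leading run -/
def peel (b : Bool) : Hd b ≃ (Np ⊕ (Np × Hd !b)) where
  toFun w :=
    if h : rest b w.val = [] then .inl ⟨lead b w.val, lead_pos w.prop⟩
    else .inr (⟨lead b w.val, lead_pos w.prop⟩, ⟨rest b w.val, by
      rcases hr : rest b w.val with _ | ⟨c, l⟩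
      · exact absurd hr h
      · have hne := rest_head b w.val
        rw [hr] at hne
        simp only [List.head?_cons] at hne ⊢
        cases c <;> cases b <;> simp_all⟩)
  invFun s :=
    match s with
    | .inl k => ⟨List.replicate k.val b, by
        cases k with | mk k hk => cases k with | zero => omega | succ n =>
          simp [List.replicate_succ]⟩
    | .inr (k, w) => ⟨List.replicate k.val b ++ w.val, by
        cases k with | mk k hk => cases k with | zero => omega | succ n =>
          simp [List.replicate_succ]⟩
  left_inv w := by
    by_cases h : rest b w.val = [] <;>
      · simp only [h, dite_true, dite_false, reduceDIte]
        exact Subtype.ext (by simpa [h] using decomp b w.val)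
  right_inv s := by
    rcases s with k | ⟨k, w⟩
    · have h1 : rest b (List.replicate k.val b ++ []) = [] := rest_rep b k.val (by simp)
      have h2 : lead b (List.replicate k.val b ++ []) = k.val := lead_rep b k.val (by simp)
      simp only [List.append_nil] at h1 h2
      simp [h1, h2]
    · have hw : w.val.head? ≠ some b := by
        rw [w.prop]; cases b <;> simp
      have h1 : rest b (List.replicate k.val b ++ w.val) = w.val := rest_rep b k.val hw
      have h2 : lead b (List.replicate k.val b ++ w.val) = k.val := lead_rep b k.val hw
      have hne : w.val ≠ [] := by
        intro hnil
        have hp := w.prop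
        rw [hnil] at hp
        simp at hp
      have hr : rest b (List.replicate k.val b ++ w.val) ≠ [] := by rw [h1]; exact hne
      simp [h1, h2, hr, hne]

/-- nonempty words split by head -/
def hdSplit : (Hd true ⊕ Hd false) ≃ Wd where
  toFun s :=
    match s with
    | .inl w => ⟨w.val, by have := w.prop; intro h; simp [h] at this⟩
    | .inr w => ⟨w.val, by have := w.prop; intro h; simp [h] at this⟩
  invFun w :=
    match hw : w.val, w.prop with
    | [], hp => absurd rfl (by exact hp)
    | true :: l, _ => .inl ⟨true :: l, rfl⟩
    | false :: l, _ => .inr ⟨false :: l, rfl⟩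
  left_inv s := by
    rcases s with ⟨w, hw⟩ | ⟨w, hw⟩ <;>
    · rcases w with _ | ⟨c, l⟩
      · simp at hw
      · simp only [List.head?_cons, Option.some.injEq] at hw
        subst hw
        rfl
  right_inv w := by
    rcases w with ⟨w, hw⟩
    rcases w with _ | ⟨c, l⟩
    · exact absurd rfl hw
    · cases c <;> rfl

/-- sigma of fixed-length words is nonempty words -/
def sigLw : (Σ _k : Np, Lw _k.val) ≃ Wd where
  toFun p := ⟨p.2.val, by
      intro h
      have h1 := p.2.prop
      have h2 := p.1.prop
      rw [h] at h1
      simp at h1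
      omega⟩
  invFun w := ⟨⟨w.val.length, List.length_pos_iff.mpr w.prop⟩, ⟨w.val, rfl⟩⟩
  left_inv p := by
    obtain ⟨⟨k, hk⟩, ⟨w, hw⟩⟩ := p
    dsimp at hw
    subst hw
    rfl
  right_inv w := rfl

/-- length (k+1) words = cons true/false on length k words -/
def consSplit (k : ℕ) : (Lw k ⊕ Lw k) ≃ Lw (k + 1) where
  toFun s :=
    match s with
    | .inl w => ⟨true :: w.val, by simp [w.prop]⟩
    | .inr w => ⟨false :: w.val, by simp [w.prop]⟩
  invFun w :=
    match hw : w.val, w.prop with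
    | [], hp => absurd hp (by simp)
    | true :: l, hp => .inl ⟨l, by simpa using hp⟩
    | false :: l, hp => .inr ⟨l, by simpa using hp⟩
  left_inv s := by rcases s with ⟨w, hw⟩ | ⟨w, hw⟩ <;> rfl
  right_inv w := by
    rcases w with ⟨w, hw⟩
    rcases w with _ | ⟨c, l⟩
    · simp at hw
    · cases c <;> rfl


section words
variable (𝕂 : Type u) [CommRing 𝕂] (M : Type v) (N : Type w)
  [AddCommGroup M] [Module 𝕂 M] [AddCommGroup N] [Module 𝕂 N]

noncomputable def F : List Bool → ModuleCat.{max u v w} 𝕂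
  | [] => ModuleCat.of 𝕂 (ULift.{max v w} 𝕂)
  | true :: l => ModuleCat.of 𝕂 (M ⊗[𝕂] F l)
  | false :: l => ModuleCat.of 𝕂 (N ⊗[𝕂] F l)

noncomputable def Fsplit : ∀ a b : List Bool, F 𝕂 M N (a ++ b) ≃ₗ[𝕂] (F 𝕂 M N a ⊗[𝕂] F 𝕂 M N b)
  | [], b => (TensorProduct.lid 𝕂 (F 𝕂 M N b)).symm.trans
      (TensorProduct.congr (ULift.moduleEquiv.symm) (LinearEquiv.refl 𝕂 _))
  | true :: a, b =>
      (TensorProduct.congr (LinearEquiv.refl 𝕂 M) (Fsplit a b)).trans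
        (TensorProduct.assoc 𝕂 M (F 𝕂 M N a) (F 𝕂 M N b)).symm
  | false :: a, b =>
      (TensorProduct.congr (LinearEquiv.refl 𝕂 N) (Fsplit a b)).trans
        (TensorProduct.assoc 𝕂 N (F 𝕂 M N a) (F 𝕂 M N b)).symm

noncomputable def FpowT : ∀ k : ℕ, (⨂[𝕂]^k M) ≃ₗ[𝕂] F 𝕂 M N (List.replicate k true)
  | 0 => (PiTensorProduct.isEmptyEquiv (Fin 0)).trans ULift.moduleEquiv.symm
  | k + 1 => (powSucc 𝕂 M k).trans
      (TensorProduct.congr (LinearEquiv.refl 𝕂 M) (FpowT k))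

noncomputable def FpowF : ∀ k : ℕ, (⨂[𝕂]^k N) ≃ₗ[𝕂] F 𝕂 M N (List.replicate k false)
  | 0 => (PiTensorProduct.isEmptyEquiv (Fin 0)).trans ULift.moduleEquiv.symm
  | k + 1 => (powSucc 𝕂 N k).trans
      (TensorProduct.congr (LinearEquiv.refl 𝕂 N) (FpowF k))

/-- decomposition of the `k`-th tensor power of `M × N` into words -/
noncomputable def powProd : ∀ k : ℕ,
    (⨂[𝕂]^k (M × N)) ≃ₗ[𝕂] ⨁ ww : Lw k, F 𝕂 M N ww.val
  | 0 => by
      haveI : Unique (Lw 0) :=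
        ⟨⟨⟨[], rfl⟩⟩, fun ww => Subtype.ext (List.length_eq_zero_iff.mp ww.prop)⟩
      exact (PiTensorProduct.isEmptyEquiv (Fin 0) : (⨂[𝕂]^0 (M × N)) ≃ₗ[𝕂] 𝕂) ≪≫ₗ
        (ULift.moduleEquiv : ULift.{max v w} 𝕂 ≃ₗ[𝕂] 𝕂).symm ≪≫ₗ
        (DirectSum.lid 𝕂 (F 𝕂 M N []) (Lw 0)).symm ≪≫ₗ
        dsCongr 𝕂 fun ww : Lw 0 =>
          eqLEquiv 𝕂 (fun l => ↥(F 𝕂 M N l)) (List.length_eq_zero_iff.mp ww.prop).symm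
  | k + 1 =>
      (powSucc 𝕂 (M × N) k).trans <|
      (TensorProduct.congr (LinearEquiv.refl 𝕂 (M × N)) (powProd k)).trans <|
      (TensorProduct.prodLeft 𝕂 𝕂 M N (⨁ ww : Lw k, F 𝕂 M N ww.val)).trans <|
      (LinearEquiv.prodCongr
        (TensorProduct.directSumRight 𝕂 𝕂 M (fun ww : Lw k => ↥(F 𝕂 M N ww.val)))
        (TensorProduct.directSumRight 𝕂 𝕂 N (fun ww : Lw k => ↥(F 𝕂 M N ww.val)))).trans <|
      ((dsSum 𝕂 (fun s : Lw k ⊕ Lw k => ↥(F 𝕂 M N ((consSplit k) s).val))).symm).trans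
      (dsReindex 𝕂 (consSplit k) (fun ww : Lw (k+1) => ↥(F 𝕂 M N ww.val)))
end words

section assembly
variable (𝕂 : Type u) [CommRing 𝕂] (M : Type v) (N : Type w)
  [AddCommGroup M] [Module 𝕂 M] [AddCommGroup N] [Module 𝕂 N]

/-- abbreviation for the reduced tensor algebra underlying module -/
noncomputable abbrev RTA (P : Type*) [AddCommGroup P] [Module 𝕂 P] :=
  ⨁ k : Np, (⨂[𝕂]^(k.val) P)

/-- `T̄(M × N)` as a direct sum over nonempty words -/
noncomputable def bigD : RTA 𝕂 (M × N) ≃ₗ[𝕂] ⨁ ww : Wd, F 𝕂 M N ww.val :=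
  (dsCongr 𝕂 fun k : Np => powProd 𝕂 M N k.val) ≪≫ₗ
  (DirectSum.sigmaLcurryEquiv (R := 𝕂)
    (δ := fun (k : Np) (ww : Lw k.val) => ↥(F 𝕂 M N ww.val))).symm ≪≫ₗ
  dsReindex 𝕂 sigLw (fun ww : Wd => ↥(F 𝕂 M N ww.val))

noncomputable def WA := ⨁ ww : Hd true, F 𝕂 M N ww.val
noncomputable def WB := ⨁ ww : Hd false, F 𝕂 M N ww.val

noncomputable instance : AddCommGroup (WA 𝕂 M N) :=
  inferInstanceAs (AddCommGroup (⨁ ww : Hd true, F 𝕂 M N ww.val))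
noncomputable instance : Module 𝕂 (WA 𝕂 M N) :=
  inferInstanceAs (Module 𝕂 (⨁ ww : Hd true, F 𝕂 M N ww.val))
noncomputable instance : AddCommGroup (WB 𝕂 M N) :=
  inferInstanceAs (AddCommGroup (⨁ ww : Hd false, F 𝕂 M N ww.val))
noncomputable instance : Module 𝕂 (WB 𝕂 M N) :=
  inferInstanceAs (Module 𝕂 (⨁ ww : Hd false, F 𝕂 M N ww.val))

noncomputable def splitHdL : (⨁ ww : Wd, F 𝕂 M N ww.val) ≃ₗ[𝕂] WA 𝕂 M N × WB 𝕂 M N :=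
  (dsReindex 𝕂 hdSplit (fun ww : Wd => ↥(F 𝕂 M N ww.val))).symm ≪≫ₗ
  dsSum 𝕂 (fun s : Hd true ⊕ Hd false => ↥(F 𝕂 M N (hdSplit s).val))

/-- peel the leading `true`-run -/
noncomputable def peelA : WA 𝕂 M N ≃ₗ[𝕂] RTA 𝕂 M × (RTA 𝕂 M ⊗[𝕂] WB 𝕂 M N) :=
  (dsReindex 𝕂 (peel true).symm
      (fun ww : Hd true => ↥(F 𝕂 M N ww.val))).symm ≪≫ₗ
  dsSum 𝕂 (fun s : Np ⊕ (Np × Hd false) =>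
      ↥(F 𝕂 M N ((peel true).symm s).val)) ≪≫ₗ
  LinearEquiv.prodCongr
    ((dsCongr 𝕂 fun k : Np => FpowT 𝕂 M N k.val).symm)
    ((dsCongr 𝕂 fun p : Np × Hd false =>
        Fsplit 𝕂 M N (List.replicate p.1.val true) p.2.val) ≪≫ₗ
      (TensorProduct.directSum 𝕂 𝕂
        (fun k : Np => ↥(F 𝕂 M N (List.replicate k.val true)))
        (fun ww : Hd false => ↥(F 𝕂 M N ww.val))).symm ≪≫ₗ
      TensorProduct.congr ((dsCongr 𝕂 fun k : Np => FpowT 𝕂 M N k.val).symm)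
        (LinearEquiv.refl 𝕂 (WB 𝕂 M N)))

/-- peel the leading `false`-run -/
noncomputable def peelB : WB 𝕂 M N ≃ₗ[𝕂] RTA 𝕂 N × (RTA 𝕂 N ⊗[𝕂] WA 𝕂 M N) :=
  (dsReindex 𝕂 (peel false).symm
      (fun ww : Hd false => ↥(F 𝕂 M N ww.val))).symm ≪≫ₗ
  dsSum 𝕂 (fun s : Np ⊕ (Np × Hd true) =>
      ↥(F 𝕂 M N ((peel false).symm s).val)) ≪≫ₗ
  LinearEquiv.prodCongr
    ((dsCongr 𝕂 fun k : Np => FpowF 𝕂 M N k.val).symm)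
    ((dsCongr 𝕂 fun p : Np × Hd true =>
        Fsplit 𝕂 M N (List.replicate p.1.val false) p.2.val) ≪≫ₗ
      (TensorProduct.directSum 𝕂 𝕂
        (fun k : Np => ↥(F 𝕂 M N (List.replicate k.val false)))
        (fun ww : Hd true => ↥(F 𝕂 M N ww.val))).symm ≪≫ₗ
      TensorProduct.congr ((dsCongr 𝕂 fun k : Np => FpowF 𝕂 M N k.val).symm)
        (LinearEquiv.refl 𝕂 (WA 𝕂 M N)))
end assembly
end RTAaux

namespace RTAaux
section final
variable (𝕂 : Type u) [CommRing 𝕂] (M : Type v) (N : Type w)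
  [AddCommGroup M] [Module 𝕂 M] [AddCommGroup N] [Module 𝕂 N]

noncomputable def qA : WA 𝕂 M N ≃ₗ[𝕂]
    RTA 𝕂 M × ((RTA 𝕂 M ⊗[𝕂] RTA 𝕂 N) × ((RTA 𝕂 M ⊗[𝕂] RTA 𝕂 N) ⊗[𝕂] WA 𝕂 M N)) :=
  peelA 𝕂 M N ≪≫ₗ LinearEquiv.prodCongr (LinearEquiv.refl 𝕂 (RTA 𝕂 M))
    (TensorProduct.congr (LinearEquiv.refl 𝕂 (RTA 𝕂 M)) (peelB 𝕂 M N) ≪≫ₗ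
      TensorProduct.prodRight 𝕂 𝕂 (RTA 𝕂 M) (RTA 𝕂 N) (RTA 𝕂 N ⊗[𝕂] WA 𝕂 M N) ≪≫ₗ
      LinearEquiv.prodCongr (LinearEquiv.refl 𝕂 (RTA 𝕂 M ⊗[𝕂] RTA 𝕂 N))
        (TensorProduct.assoc 𝕂 (RTA 𝕂 M) (RTA 𝕂 N) (WA 𝕂 M N)).symm)

noncomputable def qB : WB 𝕂 M N ≃ₗ[𝕂]
    RTA 𝕂 N × ((RTA 𝕂 N ⊗[𝕂] RTA 𝕂 M) × ((RTA 𝕂 M ⊗[𝕂] RTA 𝕂 N) ⊗[𝕂] WB 𝕂 M N)) :=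
  peelB 𝕂 M N ≪≫ₗ LinearEquiv.prodCongr (LinearEquiv.refl 𝕂 (RTA 𝕂 N))
    (TensorProduct.congr (LinearEquiv.refl 𝕂 (RTA 𝕂 N)) (peelA 𝕂 M N) ≪≫ₗ
      TensorProduct.prodRight 𝕂 𝕂 (RTA 𝕂 N) (RTA 𝕂 M) (RTA 𝕂 M ⊗[𝕂] WB 𝕂 M N) ≪≫ₗ
      LinearEquiv.prodCongr (LinearEquiv.refl 𝕂 (RTA 𝕂 N ⊗[𝕂] RTA 𝕂 M))
        ((TensorProduct.assoc 𝕂 (RTA 𝕂 N) (RTA 𝕂 M) (WB 𝕂 M N)).symm ≪≫ₗ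
          TensorProduct.congr (TensorProduct.comm 𝕂 (RTA 𝕂 N) (RTA 𝕂 M))
            (LinearEquiv.refl 𝕂 (WB 𝕂 M N))))

noncomputable def tailE : (((RTA 𝕂 M ⊗[𝕂] RTA 𝕂 N) ⊗[𝕂] WA 𝕂 M N) ×
      ((RTA 𝕂 M ⊗[𝕂] RTA 𝕂 N) ⊗[𝕂] WB 𝕂 M N)) ≃ₗ[𝕂]
    (RTA 𝕂 (M × N)) ⊗[𝕂] (RTA 𝕂 M ⊗[𝕂] RTA 𝕂 N) :=
  (TensorProduct.prodRight 𝕂 𝕂 (RTA 𝕂 M ⊗[𝕂] RTA 𝕂 N) (WA 𝕂 M N) (WB 𝕂 M N)).symm ≪≫ₗ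
    TensorProduct.congr (LinearEquiv.refl 𝕂 (RTA 𝕂 M ⊗[𝕂] RTA 𝕂 N))
      ((splitHdL 𝕂 M N).symm ≪≫ₗ (bigD 𝕂 M N).symm) ≪≫ₗ
    TensorProduct.comm 𝕂 (RTA 𝕂 M ⊗[𝕂] RTA 𝕂 N) (RTA 𝕂 (M × N))

noncomputable def finalE : RTA 𝕂 (M × N) ≃ₗ[𝕂]
    RTA 𝕂 M × (RTA 𝕂 N × ((RTA 𝕂 M ⊗[𝕂] RTA 𝕂 N) × ((RTA 𝕂 N ⊗[𝕂] RTA 𝕂 M) ×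
      ((RTA 𝕂 (M × N)) ⊗[𝕂] (RTA 𝕂 M ⊗[𝕂] RTA 𝕂 N))))) :=
  bigD 𝕂 M N ≪≫ₗ splitHdL 𝕂 M N ≪≫ₗ LinearEquiv.prodCongr (qA 𝕂 M N) (qB 𝕂 M N) ≪≫ₗ
    shuffle 𝕂 (RTA 𝕂 M) (RTA 𝕂 N) (RTA 𝕂 M ⊗[𝕂] RTA 𝕂 N) (RTA 𝕂 N ⊗[𝕂] RTA 𝕂 M)
      ((RTA 𝕂 M ⊗[𝕂] RTA 𝕂 N) ⊗[𝕂] WA 𝕂 M N)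
      ((RTA 𝕂 M ⊗[𝕂] RTA 𝕂 N) ⊗[𝕂] WB 𝕂 M N) ≪≫ₗ
    LinearEquiv.prodCongr (LinearEquiv.refl 𝕂 (RTA 𝕂 M))
      (LinearEquiv.prodCongr (LinearEquiv.refl 𝕂 (RTA 𝕂 N))
        (LinearEquiv.prodCongr (LinearEquiv.refl 𝕂 (RTA 𝕂 M ⊗[𝕂] RTA 𝕂 N))
          (LinearEquiv.prodCongr (LinearEquiv.refl 𝕂 (RTA 𝕂 N ⊗[𝕂] RTA 𝕂 M)) (tailE 𝕂 M N))))
end final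
end RTAaux



open scoped TensorProduct DirectSum

/-- The `𝕂`-module underlying the reduced (non-unital) tensor algebra on `M`:
`T̄(M) = ⨁_{k ≥ 1} M^{⊗k}`. -/
def ReducedTensorAlgebra (𝕂 : Type*) [CommRing 𝕂] (M : Type*) [AddCommGroup M]
    [Module 𝕂 M] : Type _ :=
  ⨁ k : {n : ℕ // 0 < n}, TensorPower 𝕂 (k : ℕ) M

noncomputable instance (𝕂 : Type*) [CommRing 𝕂] (M : Type*) [AddCommGroup M]
    [Module 𝕂 M] : AddCommGroup (ReducedTensorAlgebra 𝕂 M) :=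
  inferInstanceAs (AddCommGroup (⨁ k : {n : ℕ // 0 < n}, TensorPower 𝕂 (k : ℕ) M))

noncomputable instance (𝕂 : Type*) [CommRing 𝕂] (M : Type*) [AddCommGroup M]
    [Module 𝕂 M] : Module 𝕂 (ReducedTensorAlgebra 𝕂 M) :=
  inferInstanceAs (Module 𝕂 (⨁ k : {n : ℕ // 0 < n}, TensorPower 𝕂 (k : ℕ) M))

/-- the reduced tensor algebra satisfies the defining equation of
functors of type `x/(1-x)`:
`T̄(M ⊕ N) ≅ T̄(M) ⊕ T̄(N) ⊕ T̄(M)⊗T̄(N) ⊕ T̄(N)⊗T̄(M) ⊕ T̄(M ⊕ N)⊗T̄(M)⊗T̄(N)`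
as `𝕂`-modules. -/
theorem reducedTensorAlgebra_prod_iso (𝕂 : Type*) [CommRing 𝕂]
    (M N : Type*) [AddCommGroup M] [Module 𝕂 M] [AddCommGroup N] [Module 𝕂 N] :
    Nonempty (ReducedTensorAlgebra 𝕂 (M × N) ≃ₗ[𝕂]
      ReducedTensorAlgebra 𝕂 M × ReducedTensorAlgebra 𝕂 N ×
        (ReducedTensorAlgebra 𝕂 M ⊗[𝕂] ReducedTensorAlgebra 𝕂 N) ×
        (ReducedTensorAlgebra 𝕂 N ⊗[𝕂] ReducedTensorAlgebra 𝕂 M) ×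
        (ReducedTensorAlgebra 𝕂 (M × N) ⊗[𝕂]
          (ReducedTensorAlgebra 𝕂 M ⊗[𝕂] ReducedTensorAlgebra 𝕂 N))) := by
  exact ⟨RTAaux.finalE 𝕂 M N⟩
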